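/- Let Y be a rational vector space, f : ℚ_p → Y, s ≥ 1, N_1, ..., N_s ∈ ℤ, a_1, ..., a_s ∈ ℚ_p. If Δ_{h_1} ⋯ Δ_{h_s} f(x) = 0 for all x ∈ ℚ_p whenever h_k ∉ a_k + p^{-N_k} ℤ_p for every k = 1, ..., s, then Δ_{h_1} ⋯ Δ_{h_s} f(x) = 0 for all x, h_1, ..., h_s ∈ ℚ_p. -/

import Mathlib

/-- The difference operator `Δ_h f (x) = f (x + h) - f x`. -/
def dd {X Y : Type*} [Add X] [Sub Y] (h : X) (f : X → Y) : X → Y :=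
  fun x => f (x + h) - f x

/-- Iterated difference `Δ_{h₁}(Δ_{h₂ ⋯ hₛ} f)` for a list of steps. -/
def ddIter {X Y : Type*} [Add X] [Sub Y] (hs : List X) (f : X → Y) : X → Y :=
  hs.foldr dd f

lemma ddIter_append {X Y : Type*} [Add X] [Sub Y] (l₁ l₂ : List X) (f : X → Y) :
    ddIter (l₁ ++ l₂) f = ddIter l₁ (ddIter l₂ f) :=
  List.foldr_append

lemma ddIter_sub {X Y : Type*} [Add X] [AddCommGroup Y] (l : List X) (F G : X → Y) (x : X) :
    ddIter l (fun y => F y - G y) x = ddIter l F x - ddIter l G x := by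
  induction l generalizing x with
  | nil => rfl
  | cons h t ih =>
    show ddIter t (fun y => F y - G y) (x + h) - ddIter t (fun y => F y - G y) x = _
    rw [ih, ih]
    show _ = (ddIter t F (x + h) - ddIter t F x) - (ddIter t G (x + h) - ddIter t G x)
    abel

lemma ddIter_shift {X Y : Type*} [AddCommMonoid X] [Sub Y] (l : List X) (G : X → Y) (v x : X) :
    ddIter l (fun y => G (y + v)) x = ddIter l G (x + v) := by
  induction l generalizing x with
  | nil => rfl
  | cons h t ih =>
    show ddIter t (fun y => G (y + v)) (x + h) - ddIter t (fun y => G (y + v)) x = _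
    rw [ih, ih]
    show _ = ddIter t G (x + v + h) - ddIter t G (x + v)
    rw [add_right_comm]

lemma dd_cocycle {X Y : Type*} [AddCommMonoid X] [AddCommGroup Y] (f : X → Y) (u v : X) :
    dd v f = fun x => dd (u + v) f x - dd u f (x + v) := by
  funext x
  have h1 : x + (u + v) = x + v + u := by rw [add_comm u v, add_assoc]
  simp only [dd, h1]
  abel

lemma exists_far {p : ℕ} [Fact p.Prime] (b v : ℚ_[p]) (C : ℝ) :
    ∃ u : ℚ_[p], C < ‖u - b‖ ∧ C < ‖u + v - b‖ := by
  have hp : (1 : ℝ) < p := by exact_mod_cast (Fact.out : p.Prime).one_lt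
  obtain ⟨n, hn⟩ := pow_unbounded_of_one_lt (max (max C ‖b‖) ‖v - b‖) hp
  refine ⟨(p : ℚ_[p]) ^ (-(n : ℤ)), ?_, ?_⟩
  · have hnu : ‖(p : ℚ_[p]) ^ (-(n : ℤ))‖ = (p : ℝ) ^ n := by
      rw [Padic.norm_p_zpow, neg_neg, zpow_natCast]
    have hb : ‖(-b : ℚ_[p])‖ < ‖(p : ℚ_[p]) ^ (-(n : ℤ))‖ := by
      rw [hnu, norm_neg]
      exact lt_of_le_of_lt (le_max_of_le_left (le_max_right _ _)) hn
    rw [sub_eq_add_neg, Padic.add_eq_max_of_ne (ne_of_gt hb), max_eq_left hb.le, hnu]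
    exact lt_of_le_of_lt (le_max_of_le_left (le_max_left _ _)) hn
  · have hnu : ‖(p : ℚ_[p]) ^ (-(n : ℤ))‖ = (p : ℝ) ^ n := by
      rw [Padic.norm_p_zpow, neg_neg, zpow_natCast]
    have hb : ‖v - b‖ < ‖(p : ℚ_[p]) ^ (-(n : ℤ))‖ := by
      rw [hnu]; exact lt_of_le_of_lt (le_max_right _ _) hn
    rw [add_sub_assoc, Padic.add_eq_max_of_ne (ne_of_gt hb), max_eq_left hb.le, hnu]
    exact lt_of_le_of_lt (le_max_of_le_left (le_max_left _ _)) hn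

lemma key {p : ℕ} [Fact p.Prime] {Y : Type*} [AddCommGroup Y] (n : ℕ) (f : ℚ_[p] → Y)
    (N : Fin n → ℤ) (a : Fin n → ℚ_[p])
    (H : ∀ x : ℚ_[p], ∀ h : Fin n → ℚ_[p],
      (∀ k, (p : ℝ) ^ (N k) < ‖h k - a k‖) → ddIter (List.ofFn h) f x = 0) :
    ∀ (x : ℚ_[p]) (h : Fin n → ℚ_[p]), ddIter (List.ofFn h) f x = 0 := by
  induction n generalizing f with
  | zero => intro x h; exact H x h (fun k => k.elim0)
  | succ n ih =>
    have step1 : ∀ v : ℚ_[p], (p : ℝ) ^ (N (Fin.last n)) < ‖v - a (Fin.last n)‖ →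
        ∀ (x : ℚ_[p]) (h' : Fin n → ℚ_[p]), ddIter (List.ofFn h') (dd v f) x = 0 := by
      intro v hv
      refine ih (dd v f) (N ∘ Fin.castSucc) (a ∘ Fin.castSucc) ?_
      intro x h' hh'
      have hc : ∀ k : Fin (n + 1),
          (p : ℝ) ^ (N k) < ‖(Fin.snoc h' v : Fin (n+1) → ℚ_[p]) k - a k‖ := by
        intro k
        refine Fin.lastCases ?_ ?_ k
        · simpa using hv
        · intro i; simpa using hh' i
      have := H x (Fin.snoc h' v) hc
      rw [List.ofFn_succ'] at this
      simp only [List.concat_eq_append, ddIter_append, Fin.snoc_last,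
        Function.comp_def, Fin.snoc_castSucc] at this
      convert this using 3
      rfl
    have step2 : ∀ (v x : ℚ_[p]) (h' : Fin n → ℚ_[p]),
        ddIter (List.ofFn h') (dd v f) x = 0 := by
      intro v x h'
      obtain ⟨u, hu1, hu2⟩ := exists_far (a (Fin.last n)) v ((p : ℝ) ^ (N (Fin.last n)))
      rw [dd_cocycle f u v]
      have : (fun x0 => dd (u + v) f x0 - dd u f (x0 + v)) =
          fun x0 => dd (u + v) f x0 - (fun y => dd u f (y + v)) x0 := rfl
      rw [this, ddIter_sub, ddIter_shift, step1 (u + v) hu2, step1 u hu1, sub_zero]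
    intro x h
    rw [List.ofFn_succ']
    simp only [List.concat_eq_append, ddIter_append]
    exact step2 (h (Fin.last n)) x (h ∘ Fin.castSucc)

theorem stmt18 {p : ℕ} [Fact p.Prime] {Y : Type*} [AddCommGroup Y] [Module ℚ Y]
    (f : ℚ_[p] → Y) (s : ℕ) (hs : 1 ≤ s) (N : Fin s → ℤ) (a : Fin s → ℚ_[p])
    (H : ∀ x : ℚ_[p], ∀ h : Fin s → ℚ_[p],
      (∀ k, (p : ℝ) ^ (N k) < ‖h k - a k‖) → ddIter (List.ofFn h) f x = 0) :
    ∀ (x : ℚ_[p]) (h : Fin s → ℚ_[p]), ddIter (List.ofFn h) f x = 0 :=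
  key s f N a H
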